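/- Let A, A⁽ᵗ⁾ be square matrices and D, D⁽ᵗ⁾, y fixed, with A⁽ᵗ⁾ → A, D⁽ᵗ⁾ → D, and the spectral radius of A less than 1. Then the time-varying affine iteration z⁽ᵗ⁺¹⁾ = −D⁽ᵗ⁾y + A⁽ᵗ⁾z⁽ᵗ⁾ converges, for any initial z⁽⁰⁾, to z^∞ = −(I − A)⁻¹Dy. -/

import Mathlib

open Matrix Filter

namespace Stmt17Aux

variable {n : ℕ}

/-- crude matrix norm: sum of absolute values of all entries -/
noncomputable def cnorm (M : Matrix (Fin n) (Fin n) ℝ) : ℝ := ∑ i, ∑ j, |M i j|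

lemma cnorm_nonneg (M : Matrix (Fin n) (Fin n) ℝ) : 0 ≤ cnorm M := by
  refine Finset.sum_nonneg fun i _ => Finset.sum_nonneg fun j _ => abs_nonneg _

lemma mulVec_norm_le (M : Matrix (Fin n) (Fin n) ℝ) (x : Fin n → ℝ) :
    ‖M.mulVec x‖ ≤ cnorm M * ‖x‖ := by
  rw [pi_norm_le_iff_of_nonneg (by have := cnorm_nonneg M; positivity)]
  intro i
  calc ‖M.mulVec x i‖ = |∑ j, M i j * x j| := rfl
    _ ≤ ∑ j, |M i j * x j| := Finset.abs_sum_le_sum_abs _ _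
    _ ≤ ∑ j, |M i j| * ‖x‖ := by
        refine Finset.sum_le_sum fun j _ => ?_
        rw [abs_mul]
        exact mul_le_mul_of_nonneg_left (norm_le_pi_norm x j) (abs_nonneg _)
    _ = (∑ j, |M i j|) * ‖x‖ := (Finset.sum_mul _ _ _).symm
    _ ≤ cnorm M * ‖x‖ := by
        refine mul_le_mul_of_nonneg_right ?_ (norm_nonneg _)
        exact Finset.single_le_sum (f := fun i => ∑ j, |M i j|)
          (fun i _ => Finset.sum_nonneg fun j _ => abs_nonneg _) (Finset.mem_univ i)

lemma cnorm_tendsto (A : Matrix (Fin n) (Fin n) ℝ) (At : ℕ → Matrix (Fin n) (Fin n) ℝ)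
    (hA : ∀ i j, Tendsto (fun t => At t i j) atTop (nhds (A i j))) :
    Tendsto (fun t => cnorm (At t - A)) atTop (nhds 0) := by
  have : Tendsto (fun t => ∑ i, ∑ j, |At t i j - A i j|) atTop
      (nhds (∑ i : Fin n, ∑ j : Fin n, (0:ℝ))) := by
    refine tendsto_finset_sum _ fun i _ => tendsto_finset_sum _ fun j _ => ?_
    have h := ((hA i j).sub (tendsto_const_nhds (x := A i j))).abs
    simpa using h
  simpa [cnorm, Matrix.sub_apply] using this

lemma det_one_sub_isUnit (A : Matrix (Fin n) (Fin n) ℝ)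
    (hρ : spectralRadius ℂ (A.map Complex.ofReal) < 1) :
    IsUnit (1 - A).det := by
  set B := A.map Complex.ofReal with hB
  have h1 : (1 : ℂ) ∉ spectrum ℂ B := by
    intro hmem
    have hle : (‖(1:ℂ)‖₊ : ENNReal) ≤ spectralRadius ℂ B := by
      unfold spectralRadius
      exact le_iSup₂ (f := fun k (_ : k ∈ spectrum ℂ B) => (‖k‖₊ : ENNReal)) 1 hmem
    simp at hle
    exact absurd (lt_of_le_of_lt hle hρ) (lt_irrefl _)
  have hunit : IsUnit (1 - B) := by
    rw [spectrum.mem_iff, not_not] at h1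
    simpa using h1
  have hdetB : IsUnit (1 - B).det := (Matrix.isUnit_iff_isUnit_det _).mp hunit
  have hmap : (1 - A).map (Complex.ofRealHom) = 1 - B := by
    ext i j
    by_cases h : i = j <;> simp [Matrix.map_apply, Matrix.one_apply, h, hB]
  have hdet : ((1 - A).det : ℂ) = (1 - B).det := by
    rw [← hmap]
    have h := RingHom.map_det Complex.ofRealHom (1 - A)
    simpa [RingHom.mapMatrix_apply] using h
  rw [isUnit_iff_ne_zero]
  intro h0
  rw [isUnit_iff_ne_zero, ← hdet] at hdetB
  simp [h0] at hdetB

lemma exists_pow_contract (A : Matrix (Fin n) (Fin n) ℝ)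
    (hρ : spectralRadius ℂ (A.map Complex.ofReal) < 1) :
    ∃ (m : ℕ) (α : ℝ), 0 < m ∧ 0 < α ∧ α < 1 ∧
      ∀ x : Fin n → ℝ, ‖(A ^ m).mulVec x‖ ≤ α ^ m * ‖x‖ := by
  letI : NormedRing (Matrix (Fin n) (Fin n) ℂ) := Matrix.linftyOpNormedRing
  letI : NormedAlgebra ℂ (Matrix (Fin n) (Fin n) ℂ) := Matrix.linftyOpNormedAlgebra
  haveI : CompleteSpace (Matrix (Fin n) (Fin n) ℂ) := FiniteDimensional.complete ℂ _
  set B := A.map Complex.ofReal with hB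
  obtain ⟨c, hc1, hc2⟩ := exists_between hρ
  have hgel := spectrum.pow_nnnorm_pow_one_div_tendsto_nhds_spectralRadius B
  have hev : ∀ᶠ m : ℕ in atTop, (‖B ^ m‖₊ : ENNReal) ^ (1 / (m:ℝ)) < c :=
    hgel.eventually_lt_const hc1
  obtain ⟨m, hmlt, hm1⟩ := (hev.and (eventually_ge_atTop 1)).exists
  have hmpos : 0 < m := hm1
  have hmne : (m:ℝ) ≠ 0 := Nat.cast_ne_zero.mpr hmpos.ne'
  have hklt : (‖B ^ m‖₊ : ENNReal) < c ^ m := by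
    have h2 : (‖B ^ m‖₊ : ENNReal) = ((‖B ^ m‖₊ : ENNReal) ^ (1/(m:ℝ))) ^ (m:ℝ) := by
      rw [← ENNReal.rpow_mul, one_div, inv_mul_cancel₀ hmne, ENNReal.rpow_one]
    rw [h2, ← ENNReal.rpow_natCast c m]
    exact ENNReal.rpow_lt_rpow hmlt (by positivity)
  have hcne : c ≠ ⊤ := ne_top_of_lt hc2
  have hcpos : 0 < c := lt_of_le_of_lt zero_le hc1
  refine ⟨m, c.toReal, hmpos, ENNReal.toReal_pos hcpos.ne' hcne, ?_, ?_⟩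
  · have := (ENNReal.toReal_lt_toReal hcne ENNReal.one_ne_top).mpr hc2
    simpa using this
  · intro x
    have hnormB : ‖B ^ m‖ ≤ c.toReal ^ m := by
      have h3 := (ENNReal.toReal_lt_toReal ENNReal.coe_ne_top
        (by simpa using ENNReal.pow_ne_top hcne)).mpr hklt
      rw [ENNReal.toReal_pow] at h3
      simpa [ENNReal.coe_toReal] using h3.le
    set X : Fin n → ℂ := fun i => (x i : ℂ) with hX
    have hBm : B ^ m = (A ^ m).map Complex.ofRealHom := by
      have hmm := map_pow (Complex.ofRealHom.mapMatrix (m := Fin n)) A m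
      simp only [RingHom.mapMatrix_apply] at hmm
      rw [hB]
      exact hmm.symm ▸ rfl
    have hvec : (B ^ m).mulVec X = fun i => ((A ^ m).mulVec x i : ℂ) := by
      funext i
      rw [hBm]
      exact (RingHom.map_mulVec Complex.ofRealHom (A ^ m) x i).symm
    have hnn : ∀ (v : Fin n → ℝ), ‖(fun i => (v i : ℂ))‖ = ‖v‖ := by
      intro v
      simp only [Pi.norm_def, Pi.nnnorm_def]
      congr 1
      exact Finset.sup_congr rfl fun i _ => by
        simp [nnnorm, Complex.norm_real]
    calc ‖(A ^ m).mulVec x‖ = ‖(B ^ m).mulVec X‖ := by rw [hvec, hnn]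
      _ ≤ ‖B ^ m‖ * ‖X‖ := Matrix.linfty_opNorm_mulVec _ _
      _ ≤ c.toReal ^ m * ‖x‖ := by
          rw [hX, hnn]
          exact mul_le_mul_of_nonneg_right hnormB (norm_nonneg _)

lemma scalar_tendsto_zero (a c : ℕ → ℝ) (β : ℝ) (hβ0 : 0 ≤ β) (hβ1 : β < 1)
    (ha : ∀ t, 0 ≤ a t) (hc : Tendsto c atTop (nhds 0))
    (hrec : ∀ᶠ t in atTop, a (t + 1) ≤ β * a t + c t) :
    Tendsto a atTop (nhds 0) := by
  rw [Metric.tendsto_atTop]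
  intro ε hε
  have h4 : 0 < (1 - β) * ε / 4 := by nlinarith
  have hcsm : ∀ᶠ t in atTop, c t ≤ (1 - β) * ε / 4 :=
    (hc.eventually (eventually_le_nhds h4)).mono fun t ht => by simpa using ht
  obtain ⟨T0, hT0⟩ := (hrec.and hcsm).exists_forall_of_atTop
  have key : ∀ s, a (T0 + s) ≤ β ^ s * a T0 + ε / 2 := by
    intro s
    induction s with
    | zero => simpa using by linarith [ha T0, hε]
    | succ s ih =>
      have h1 := (hT0 (T0 + s) (Nat.le_add_right _ _)).1
      have h2 := (hT0 (T0 + s) (Nat.le_add_right _ _)).2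
      have hb : β ^ s * a T0 ≥ 0 := mul_nonneg (pow_nonneg hβ0 _) (ha T0)
      calc a (T0 + (s + 1)) = a ((T0 + s) + 1) := by ring_nf
        _ ≤ β * a (T0 + s) + c (T0 + s) := h1
        _ ≤ β * (β ^ s * a T0 + ε / 2) + (1 - β) * ε / 4 := by
            have := mul_le_mul_of_nonneg_left ih hβ0
            linarith
        _ ≤ β ^ (s + 1) * a T0 + ε / 2 := by
            have hp : β ^ (s + 1) = β ^ s * β := pow_succ β s
            have h7 : β * ε / 2 + (1 - β) * ε / 4 ≤ ε / 2 := by nlinarith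
            have h8 : β * (β ^ s * a T0 + ε / 2) = β ^ s * β * a T0 + β * ε / 2 := by ring
            rw [h8, hp]
            linarith
  have hpow : Tendsto (fun s => β ^ s * a T0) atTop (nhds 0) := by
    simpa using (tendsto_pow_atTop_nhds_zero_of_lt_one hβ0 hβ1).mul_const (a T0)
  obtain ⟨s0, hs0⟩ :=
    (hpow.eventually (eventually_lt_nhds (by linarith : (0:ℝ) < ε / 2))).exists_forall_of_atTop
  refine ⟨T0 + s0, fun t ht => ?_⟩
  have h5 : a t ≤ β ^ (t - T0) * a T0 + ε / 2 := by
    have := key (t - T0)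
    rwa [Nat.add_sub_cancel' (le_trans (Nat.le_add_right _ _) ht)] at this
  have h6 : β ^ (t - T0) * a T0 < ε / 2 := hs0 (t - T0) (by omega)
  rw [Real.dist_eq, sub_zero, abs_of_nonneg (ha t)]
  linarith

end Stmt17Aux

open Stmt17Aux in
/-- Time-varying affine iteration `z⁽ᵗ⁺¹⁾ = −D⁽ᵗ⁾y + A⁽ᵗ⁾z⁽ᵗ⁾` with `A⁽ᵗ⁾ → A`,
`D⁽ᵗ⁾ → D`, and spectral radius of `A` less than 1 converges, for any initial
condition, to `z^∞ = −(I − A)⁻¹ D y`. -/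
theorem stmt17 {n : ℕ}
    (A : Matrix (Fin n) (Fin n) ℝ) (At : ℕ → Matrix (Fin n) (Fin n) ℝ)
    (D : Matrix (Fin n) (Fin n) ℝ) (Dt : ℕ → Matrix (Fin n) (Fin n) ℝ)
    (y : Fin n → ℝ)
    (hA : ∀ i j, Tendsto (fun t => At t i j) atTop (nhds (A i j)))
    (hD : ∀ i j, Tendsto (fun t => Dt t i j) atTop (nhds (D i j)))
    (hρ : spectralRadius ℂ (A.map (Complex.ofReal)) < 1)
    (z : ℕ → Fin n → ℝ)
    (hrec : ∀ t, z (t + 1) = -(Dt t).mulVec y + (At t).mulVec (z t)) :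
    Tendsto z atTop (nhds (-((1 - A)⁻¹.mulVec (D.mulVec y)))) := by
  classical
  have hdet : IsUnit (1 - A).det := det_one_sub_isUnit A hρ
  set zi : Fin n → ℝ := -((1 - A)⁻¹.mulVec (D.mulVec y)) with hzi
  have hfix : zi = -(D.mulVec y) + A.mulVec zi := by
    have h1 : (1 - A).mulVec zi = -(D.mulVec y) := by
      rw [hzi, Matrix.mulVec_neg, Matrix.mulVec_mulVec, Matrix.mul_nonsing_inv _ hdet,
        Matrix.one_mulVec]
    have h2 : (1 - A).mulVec zi = zi - A.mulVec zi := by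
      rw [Matrix.sub_mulVec, Matrix.one_mulVec]
    rw [h2] at h1
    exact sub_eq_iff_eq_add.mp h1
  have hAzi : A.mulVec zi = zi + D.mulVec y := by
    nth_rewrite 2 [hfix]
    abel
  obtain ⟨m, α, hm, hα0, hα1, hcontr⟩ := exists_pow_contract A hρ
  set N : (Fin n → ℝ) → ℝ := fun x => ∑ j ∈ Finset.range m, α⁻¹ ^ j * ‖(A ^ j).mulVec x‖
    with hN
  have hN0 : ∀ x, 0 ≤ N x := fun x =>
    Finset.sum_nonneg fun j _ => mul_nonneg (by positivity) (norm_nonneg _)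
  have hNle : ∀ x, ‖x‖ ≤ N x := by
    intro x
    have := Finset.single_le_sum
      (f := fun j => α⁻¹ ^ j * ‖(A ^ j).mulVec x‖)
      (fun j _ => mul_nonneg (by positivity) (norm_nonneg _))
      (Finset.mem_range.mpr hm)
    have h0 : ‖x‖ = α⁻¹ ^ 0 * ‖(A ^ 0).mulVec x‖ := by simp [Matrix.one_mulVec]
    rw [h0]
    exact this
  set K : ℝ := ∑ j ∈ Finset.range m, α⁻¹ ^ j * cnorm (A ^ j) with hKdef
  have hK0 : 0 ≤ K :=
    Finset.sum_nonneg fun j _ => mul_nonneg (by positivity) (cnorm_nonneg _)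
  have hNK : ∀ x, N x ≤ K * ‖x‖ := by
    intro x
    rw [hKdef, Finset.sum_mul]
    refine Finset.sum_le_sum fun j _ => ?_
    rw [mul_assoc]
    exact mul_le_mul_of_nonneg_left (mulVec_norm_le _ _) (by positivity)
  have hNadd : ∀ x x', N (x + x') ≤ N x + N x' := by
    intro x x'
    rw [hN, ← Finset.sum_add_distrib]
    refine Finset.sum_le_sum fun j _ => ?_
    rw [← mul_add]
    refine mul_le_mul_of_nonneg_left ?_ (by positivity)
    rw [Matrix.mulVec_add]
    exact norm_add_le _ _
  have hNA : ∀ x, N (A.mulVec x) ≤ α * N x := by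
    intro x
    set g : ℕ → ℝ := fun j => α⁻¹ ^ j * ‖(A ^ j).mulVec x‖ with hg
    have hNx : N x = ∑ j ∈ Finset.range m, g j := rfl
    have hg0 : g 0 = ‖x‖ := by simp [hg, Matrix.one_mulVec]
    have hgm : g m ≤ g 0 := by
      rw [hg0]
      calc g m = α⁻¹ ^ m * ‖(A ^ m).mulVec x‖ := rfl
        _ ≤ α⁻¹ ^ m * (α ^ m * ‖x‖) :=
            mul_le_mul_of_nonneg_left (hcontr x) (by positivity)
        _ = ‖x‖ := by rw [← mul_assoc, ← mul_pow, inv_mul_cancel₀ hα0.ne', one_pow, one_mul]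
    have hterm : ∀ j, α⁻¹ ^ j * ‖(A ^ j).mulVec (A.mulVec x)‖ = α * g (j + 1) := by
      intro j
      have hv : (A ^ j).mulVec (A.mulVec x) = (A ^ (j + 1)).mulVec x := by
        rw [Matrix.mulVec_mulVec, ← pow_succ]
      rw [hv, hg]
      have hα : α * α⁻¹ ^ (j + 1) = α⁻¹ ^ j := by
        rw [pow_succ', ← mul_assoc, mul_inv_cancel₀ hα0.ne', one_mul]
      rw [← mul_assoc, hα]
    have hsum : ∑ j ∈ Finset.range m, g (j + 1) ≤ N x := by
      have h9 : ∑ j ∈ Finset.range m, g (j + 1) + g 0 = N x + g m := by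
        rw [← Finset.sum_range_succ', Finset.sum_range_succ, hNx]
      linarith
    calc N (A.mulVec x) = ∑ j ∈ Finset.range m, α * g (j + 1) :=
          Finset.sum_congr rfl fun j _ => hterm j
      _ = α * ∑ j ∈ Finset.range m, g (j + 1) := by rw [Finset.mul_sum]
      _ ≤ α * N x := mul_le_mul_of_nonneg_left hsum hα0.le
  -- the error sequence
  set u : ℕ → Fin n → ℝ := fun t => z t - zi with hu_def
  set w : ℕ → Fin n → ℝ := fun t => (At t - A).mulVec zi - (Dt t - D).mulVec y with hw_def
  have hu : ∀ t, u (t + 1) = A.mulVec (u t) + ((At t - A).mulVec (u t) + w t) := by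
    intro t
    show z (t + 1) - zi = A.mulVec (z t - zi) +
      ((At t - A).mulVec (z t - zi) + ((At t - A).mulVec zi - (Dt t - D).mulVec y))
    rw [hrec t]
    simp only [Matrix.sub_mulVec, Matrix.mulVec_sub, hAzi]
    abel
  -- w tends to 0
  have hcA := cnorm_tendsto A At hA
  have hcD := cnorm_tendsto D Dt hD
  have hw0 : Tendsto (fun t => ‖w t‖) atTop (nhds 0) := by
    have hb : ∀ t, ‖w t‖ ≤ cnorm (At t - A) * ‖zi‖ + cnorm (Dt t - D) * ‖y‖ := by
      intro t
      calc ‖w t‖ ≤ ‖(At t - A).mulVec zi‖ + ‖(Dt t - D).mulVec y‖ := norm_sub_le _ _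
        _ ≤ cnorm (At t - A) * ‖zi‖ + cnorm (Dt t - D) * ‖y‖ :=
            add_le_add (mulVec_norm_le _ _) (mulVec_norm_le _ _)
    have hlim : Tendsto (fun t => cnorm (At t - A) * ‖zi‖ + cnorm (Dt t - D) * ‖y‖)
        atTop (nhds 0) := by
      have := (hcA.mul_const ‖zi‖).add (hcD.mul_const ‖y‖)
      simpa using this
    exact squeeze_zero (fun t => norm_nonneg _) hb hlim
  set a : ℕ → ℝ := fun t => N (u t) with ha_def
  have ha0 : ∀ t, 0 ≤ a t := fun t => hN0 _
  -- the recursion for a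
  have hrec2 : ∀ t, a (t + 1) ≤ α * a t + (K * cnorm (At t - A) * a t + K * ‖w t‖) := by
    intro t
    calc a (t + 1) = N (A.mulVec (u t) + ((At t - A).mulVec (u t) + w t)) :=
          congrArg N (hu t)
      _ ≤ N (A.mulVec (u t)) + (N ((At t - A).mulVec (u t)) + N (w t)) :=
          le_trans (hNadd _ _) (by linarith [hNadd ((At t - A).mulVec (u t)) (w t)])
      _ ≤ α * a t + (K * cnorm (At t - A) * a t + K * ‖w t‖) := by
          refine add_le_add (hNA _) (add_le_add ?_ ?_)
          · calc N ((At t - A).mulVec (u t)) ≤ K * ‖(At t - A).mulVec (u t)‖ := hNK _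
              _ ≤ K * (cnorm (At t - A) * ‖u t‖) :=
                  mul_le_mul_of_nonneg_left (mulVec_norm_le _ _) hK0
              _ ≤ K * cnorm (At t - A) * a t := by
                  rw [mul_assoc]
                  refine mul_le_mul_of_nonneg_left ?_ hK0
                  exact mul_le_mul_of_nonneg_left (hNle _) (cnorm_nonneg _)
          · exact hNK _
  have hsmall : ∀ᶠ t in atTop, K * cnorm (At t - A) ≤ (1 - α) / 2 := by
    have hKc : Tendsto (fun t => K * cnorm (At t - A)) atTop (nhds 0) := by
      simpa using hcA.const_mul K
    exact (hKc.eventually (eventually_le_nhds (by linarith : (0:ℝ) < (1 - α) / 2))).mono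
      fun t ht => by simpa using ht
  have hβrec : ∀ᶠ t in atTop, a (t + 1) ≤ (1 + α) / 2 * a t + K * ‖w t‖ := by
    refine hsmall.mono fun t ht => ?_
    have h1 := hrec2 t
    have h2 : K * cnorm (At t - A) * a t ≤ (1 - α) / 2 * a t :=
      mul_le_mul_of_nonneg_right ht (ha0 t)
    linarith
  have haten : Tendsto a atTop (nhds 0) := by
    refine scalar_tendsto_zero a (fun t => K * ‖w t‖) ((1 + α) / 2)
      (by linarith) (by linarith) ha0 ?_ hβrec
    simpa using hw0.const_mul K
  have hun : Tendsto (fun t => ‖u t‖) atTop (nhds 0) :=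
    squeeze_zero (fun t => norm_nonneg _) (fun t => hNle (u t)) haten
  have hu0 : Tendsto u atTop (nhds 0) := tendsto_zero_iff_norm_tendsto_zero.mpr hun
  have hz : Tendsto z atTop (nhds zi) := by
    have := hu0.add (tendsto_const_nhds (x := zi))
    simp only [zero_add] at this
    convert this using 1
    funext t
    simp [hu_def]
  exact hz
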